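/- Let V be a finite-dimensional complex vector space, N_V a norm on V, and F a filtration of V. For f ∈ V, f ≠ 0, let w_F(f) := sup{λ ∈ ℝ : f ∈ F^λ V} be the weight of f with respect to F. Then lim_{t→∞} (1/t)·log ‖f‖^t_{V,F} = −w_F(f), where N^t_{V,F} = ‖·‖^t_{V,F} is the ray of norms associated with N_V and F. Equivalently, the ray N^t_{V,F} interpolates, as t → ∞, towards the non-Archimedean norm χ_F(f) = exp(−w_F(f)) associated with F. -/

import Mathlib

open scoped BigOperators

/-- A norm on a complex vector space, given as a function with the usual axioms. -/
def IsNorm {V : Type*} [AddCommGroup V] [Module ℂ V] (N : V → ℝ) : Prop :=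
  (∀ v, 0 ≤ N v) ∧ (∀ v, N v = 0 ↔ v = 0) ∧
  (∀ (c : ℂ) (v : V), N (c • v) = ‖c‖ * N v) ∧
  (∀ v w, N (v + w) ≤ N v + N w)

/-- A (decreasing, left-continuous, exhaustive, bounded) filtration of a complex
vector space by subspaces. -/
def IsVecFiltration {V : Type*} [AddCommGroup V] [Module ℂ V]
    (F : ℝ → Submodule ℂ V) : Prop :=
  (∀ ⦃s t : ℝ⦄, s < t → F t ≤ F s) ∧
  (∀ t : ℝ, ∃ ε₀ > (0:ℝ), ∀ ε : ℝ, 0 < ε → ε < ε₀ → F (t - ε) = F t) ∧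
  (∃ t₀ : ℝ, ∀ t ≤ t₀, F t = ⊤) ∧
  (∃ t₁ : ℝ, ∀ t : ℝ, t₁ ≤ t → F t = ⊥)

/-- The ray of norms associated with a norm `N` and a filtration `F`. -/
noncomputable def rayNorm {V : Type*} [AddCommGroup V] [Module ℂ V]
    (N : V → ℝ) (F : ℝ → Submodule ℂ V) (t : ℝ) (f : V) : ℝ :=
  sInf {c : ℝ | ∃ (n : ℕ) (g : Fin n → V) (μ : Fin n → ℝ),
    (∀ i, g i ∈ F (μ i)) ∧ f = ∑ i, g i ∧
    c = ∑ i, Real.exp (-(t * μ i)) * N (g i)}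

/-- The weight of a nonzero vector with respect to a filtration:
`w_F(f) = sup{λ : f ∈ F^λ V}`. -/
noncomputable def filtWeight {V : Type*} [AddCommGroup V] [Module ℂ V]
    (F : ℝ → Submodule ℂ V) (f : V) : ℝ :=
  sSup {l : ℝ | f ∈ F l}

/-- The ray of norms interpolates towards the non-Archimedean norm associated with the
filtration: for every `f ≠ 0`, `lim_{t→∞} (1/t)·log ‖f‖^t_{V,F} = −w_F(f)`. -/
theorem rayNorm_tendsto_nonArchimedean
    {V : Type*} [AddCommGroup V] [Module ℂ V] [FiniteDimensional ℂ V]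
    (N : V → ℝ) (hN : IsNorm N) (F : ℝ → Submodule ℂ V) (hF : IsVecFiltration F)
    (f : V) (hf : f ≠ 0) :
    Filter.Tendsto (fun t : ℝ => (1 / t) * Real.log (rayNorm N F t f))
      Filter.atTop (nhds (-(filtWeight F f))) := by
  classical
  obtain ⟨hN0, hNeq, hNsmul, hNadd⟩ := hN
  obtain ⟨hFmono, hFlc, ⟨t₀, ht₀⟩, ⟨t₁, ht₁⟩⟩ := hF
  have hNf : 0 < N f := lt_of_le_of_ne (hN0 f) fun h => hf ((hNeq f).1 h.symm)
  letI : NormedAddCommGroup V := AddGroupNorm.toNormedAddCommGroup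
    { toFun := N
      map_zero' := (hNeq 0).2 rfl
      add_le' := hNadd
      neg' := fun v => by
        have h := hNsmul (-1) v
        simpa [neg_one_smul] using h
      eq_zero_of_map_eq_zero' := fun v h => (hNeq v).1 h }
  have hnorm : ∀ x : V, ‖x‖ = N x := fun _ => rfl
  letI : NormedSpace ℂ V := ⟨fun c v => by
    rw [hnorm, hnorm, hNsmul]⟩
  -- the weight
  set w := filtWeight F f with hw
  have hLne : Set.Nonempty {l : ℝ | f ∈ F l} := ⟨t₀, by simp [ht₀ t₀ le_rfl]⟩
  have hLbdd : BddAbove {l : ℝ | f ∈ F l} := by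
    refine ⟨t₁, fun l hl => ?_⟩
    by_contra hc
    push_neg at hc
    have : F l = ⊥ := ht₁ l hc.le
    exact hf (by simpa [this] using hl)
  have hnotin : ∀ μ : ℝ, w < μ → f ∉ F μ := by
    intro μ hμ hmem
    exact absurd (le_csSup hLbdd hmem) (not_le.2 hμ)
  have hfw : f ∈ F w := by
    obtain ⟨ε₀, hε₀, hlc⟩ := hFlc w
    have hlt : w - ε₀ / 2 < w := by linarith
    obtain ⟨l, hl, hll⟩ := exists_lt_of_lt_csSup hLne hlt
    have hmem : f ∈ F (w - ε₀ / 2) := hFmono hll hl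
    rwa [hlc (ε₀ / 2) (by linarith) (by linarith)] at hmem
  -- the "limit" submodule W = F μ₀ maximal among F μ, μ > w
  obtain ⟨μ₀, hμ₀w, hμ₀max⟩ : ∃ μ₀ : ℝ, w < μ₀ ∧
      ∀ μ : ℝ, w < μ → Module.finrank ℂ (F μ) ≤ Module.finrank ℂ (F μ₀) := by
    have hne : {r : ℕ | ∃ μ : ℝ, w < μ ∧ Module.finrank ℂ (F μ) = r}.Nonempty :=
      ⟨Module.finrank ℂ (F (w + 1)), w + 1, by linarith, rfl⟩
    have hbd : BddAbove {r : ℕ | ∃ μ : ℝ, w < μ ∧ Module.finrank ℂ (F μ) = r} := by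
      refine ⟨Module.finrank ℂ V, ?_⟩
      rintro r ⟨μ, _, rfl⟩
      exact Submodule.finrank_le _
    obtain ⟨μ₀, hμ₀, hr⟩ := Nat.sSup_mem hne hbd
    exact ⟨μ₀, hμ₀, fun μ hμ => hr ▸ le_csSup hbd ⟨μ, hμ, rfl⟩⟩
  have hWmax : ∀ μ : ℝ, w < μ → F μ ≤ F μ₀ := by
    intro μ hμ
    rcases le_or_gt μ₀ μ with h | h
    · rcases eq_or_lt_of_le h with h' | h'
      · exact h' ▸ le_rfl
      · exact hFmono h'
    · have hle : F μ₀ ≤ F μ := hFmono h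
      have := Submodule.eq_of_le_of_finrank_le hle (hμ₀max μ hμ)
      exact this.ge
  set W := F μ₀ with hW
  have hfW : f ∉ W := hnotin μ₀ hμ₀w
  have hWclosed : IsClosed (W : Set V) := W.closed_of_finiteDimensional
  set c := Metric.infDist f (W : Set V) with hc
  have hcpos : 0 < c :=
    (hWclosed.notMem_iff_infDist_pos ⟨0, W.zero_mem⟩).1 hfW
  have hcb : ∀ b ∈ W, c ≤ N (f - b) := by
    intro b hb
    have := Metric.infDist_le_dist_of_mem (x := f) hb
    rwa [dist_eq_norm, hnorm] at this
  -- the set defining rayNorm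
  set S : ℝ → Set ℝ := fun t => {x : ℝ | ∃ (n : ℕ) (g : Fin n → V) (μ : Fin n → ℝ),
    (∀ i, g i ∈ F (μ i)) ∧ f = ∑ i, g i ∧
    x = ∑ i, Real.exp (-(t * μ i)) * N (g i)} with hS
  have hray : ∀ t, rayNorm N F t f = sInf (S t) := fun _ => rfl
  have hSmem : ∀ t : ℝ, Real.exp (-(t * w)) * N f ∈ S t := by
    intro t
    exact ⟨1, fun _ => f, fun _ => w, fun _ => hfw, by simp, by simp⟩
  have hSbdd : ∀ t : ℝ, BddBelow (S t) := by
    intro t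
    refine ⟨0, ?_⟩
    rintro x ⟨n, g, μ, hg, hsum, rfl⟩
    exact Finset.sum_nonneg fun i _ => mul_nonneg (Real.exp_pos _).le (hN0 _)
  -- key lower bound
  have key : ∀ δ : ℝ, 0 < δ → ∀ t : ℝ, 0 ≤ t → ∀ x ∈ S t,
      c * Real.exp (-(t * (w + δ))) ≤ x := by
    rintro δ hδ t ht x ⟨n, g, μ, hg, hsum, rfl⟩
    set A : Finset (Fin n) := Finset.univ.filter fun i => μ i ≤ w + δ with hA
    have hb : (∑ i ∈ Finset.univ.filter (fun i => ¬ μ i ≤ w + δ), g i) ∈ W := by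
      refine Submodule.sum_mem _ fun i hi => ?_
      have hμi : w < μ i := by
        have := (Finset.mem_filter.1 hi).2
        push_neg at this
        linarith
      exact hWmax (μ i) hμi (hg i)
    have hsplit : f - (∑ i ∈ Finset.univ.filter (fun i => ¬ μ i ≤ w + δ), g i)
        = ∑ i ∈ A, g i := by
      rw [hsum, hA, ← Finset.sum_filter_add_sum_filter_not Finset.univ
        (fun i => μ i ≤ w + δ) g]
      abel
    have ha : c ≤ N (∑ i ∈ A, g i) := hsplit ▸ hcb _ hb
    have h1 : N (∑ i ∈ A, g i) ≤ ∑ i ∈ A, N (g i) := by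
      rw [← hnorm]
      refine (norm_sum_le A g).trans ?_
      simp [hnorm]
    calc c * Real.exp (-(t * (w + δ)))
        ≤ (∑ i ∈ A, N (g i)) * Real.exp (-(t * (w + δ))) :=
          mul_le_mul_of_nonneg_right (ha.trans h1) (Real.exp_pos _).le
      _ = ∑ i ∈ A, Real.exp (-(t * (w + δ))) * N (g i) := by
          rw [Finset.sum_mul]; exact Finset.sum_congr rfl fun i _ => mul_comm _ _
      _ ≤ ∑ i ∈ A, Real.exp (-(t * μ i)) * N (g i) := by
          refine Finset.sum_le_sum fun i hi => ?_
          have hμi : μ i ≤ w + δ := (Finset.mem_filter.1 hi).2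
          exact mul_le_mul_of_nonneg_right
            (Real.exp_le_exp.2 (by nlinarith)) (hN0 _)
      _ ≤ ∑ i, Real.exp (-(t * μ i)) * N (g i) := by
          refine Finset.sum_le_sum_of_subset_of_nonneg (Finset.filter_subset _ _)
            fun i _ _ => mul_nonneg (Real.exp_pos _).le (hN0 _)
  have hup : ∀ t : ℝ, rayNorm N F t f ≤ Real.exp (-(t * w)) * N f := fun t =>
    (hray t) ▸ csInf_le (hSbdd t) (hSmem t)
  have hlow : ∀ δ : ℝ, 0 < δ → ∀ t : ℝ, 0 ≤ t →
      c * Real.exp (-(t * (w + δ))) ≤ rayNorm N F t f := fun δ hδ t ht =>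
    (hray t) ▸ le_csInf ⟨_, hSmem t⟩ (key δ hδ t ht)
  have hpos : ∀ t : ℝ, 0 ≤ t → 0 < rayNorm N F t f := fun t ht =>
    lt_of_lt_of_le (by positivity) (hlow 1 one_pos t ht)
  -- the limit
  rw [Metric.tendsto_atTop]
  intro ε hε
  refine ⟨max 1 ((|Real.log c| + |Real.log (N f)| + 1) / (ε / 2)), fun t ht => ?_⟩
  have ht1 : 1 ≤ t := le_trans (le_max_left _ _) ht
  have ht0 : 0 < t := by linarith
  have htb : (|Real.log c| + |Real.log (N f)| + 1) / (ε / 2) ≤ t :=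
    le_trans (le_max_right _ _) ht
  have htb' : |Real.log c| + |Real.log (N f)| + 1 ≤ t * (ε / 2) := by
    rwa [div_le_iff₀ (by linarith)] at htb
  set L := Real.log (rayNorm N F t f) with hL
  have hub2 : L ≤ -(t * w) + Real.log (N f) := by
    have := Real.log_le_log (hpos t ht0.le) (hup t)
    rwa [Real.log_mul (Real.exp_ne_zero _) (ne_of_gt hNf), Real.log_exp] at this
  have hlb2 : Real.log c + (-(t * (w + ε / 2))) ≤ L := by
    have := Real.log_le_log (by positivity) (hlow (ε / 2) (by linarith) t ht0.le)
    rwa [Real.log_mul (ne_of_gt hcpos) (Real.exp_ne_zero _), Real.log_exp] at this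
  rw [Real.dist_eq, sub_neg_eq_add, abs_lt]
  have hinv : (1 / t) * t = 1 := by field_simp
  have h1 : (1 / t) * L ≤ (1 / t) * (-(t * w) + Real.log (N f)) :=
    mul_le_mul_of_nonneg_left hub2 (by positivity)
  have h2 : (1 / t) * (Real.log c + (-(t * (w + ε / 2)))) ≤ (1 / t) * L :=
    mul_le_mul_of_nonneg_left hlb2 (by positivity)
  have hlogc1 : Real.log c ≤ |Real.log c| := le_abs_self _
  have hlogc2 : -|Real.log c| ≤ Real.log c := neg_abs_le _
  have hlogN1 : Real.log (N f) ≤ |Real.log (N f)| := le_abs_self _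
  have hlogN2 : -|Real.log (N f)| ≤ Real.log (N f) := neg_abs_le _
  have habs1 : |Real.log c| ≥ 0 := abs_nonneg _
  have habs2 : |Real.log (N f)| ≥ 0 := abs_nonneg _
  constructor
  · -- -ε < (1/t)*L + w
    have expand : (1 / t) * (Real.log c + (-(t * (w + ε / 2))))
        = Real.log c / t - w - ε / 2 := by field_simp; ring
    rw [expand] at h2
    have hq : |Real.log c| / t < ε / 2 := by
      rw [div_lt_iff₀ ht0]
      nlinarith
    have h3 : -|Real.log c| / t ≤ Real.log c / t := (div_le_div_iff_of_pos_right ht0).2 hlogc2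
    have hq2 : -(ε/2) < Real.log c / t := by
      rw [neg_div] at h3
      linarith
    nlinarith
  · -- (1/t)*L + w < ε
    have expand : (1 / t) * (-(t * w) + Real.log (N f))
        = -w + Real.log (N f) / t := by field_simp
    rw [expand] at h1
    have hq : Real.log (N f) / t < ε := by
      rw [div_lt_iff₀ ht0]
      nlinarith
    nlinarith
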